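/- For all n ≥ 0, b_{2n+1} = Σ_{i=0}^{n} C(2n+2, 2i+1) k^{n-i}. -/

import Mathlib

open Finset Zsqrtd

-- im as an AddMonoidHom
private def imHom (d : ℤ) : ℤ√d →+ ℤ where
  toFun := Zsqrtd.im
  map_zero' := rfl
  map_add' := Zsqrtd.im_add

lemma sqrtd_pow_even (d : ℤ) (i : ℕ) : (sqrtd ^ (2 * i) : ℤ√d) = ((d ^ i : ℤ) : ℤ√d) := by
  rw [pow_mul, sq, Zsqrtd.dmuld, ← Int.cast_pow]

lemma sqrtd_pow_odd (d : ℤ) (i : ℕ) :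
    (sqrtd ^ (2 * i + 1) : ℤ√d) = ((d ^ i : ℤ) : ℤ√d) * sqrtd := by
  rw [pow_succ, sqrtd_pow_even]

lemma sum_odd_only (g : ℕ → ℤ) (hg : ∀ j, g (2 * j) = 0) (n : ℕ) :
    ∑ j ∈ range (2 * n + 3), g j = ∑ i ∈ range (n + 1), g (2 * i + 1) := by
  induction n with
  | zero => simp [Finset.sum_range_succ, hg 0, hg 1]
  | succ m ih =>
      have h1 : 2 * (m + 1) + 3 = (2 * m + 3) + 1 + 1 := by ring
      rw [h1, Finset.sum_range_succ, Finset.sum_range_succ, ih, Finset.sum_range_succ]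
      have h2 : 2 * m + 3 + 1 = 2 * (m + 2) := by ring
      have h3 : 2 * m + 3 = 2 * (m + 1) + 1 := by ring
      rw [h2, hg, h3, add_zero, Finset.sum_range_succ, Finset.sum_range_succ]

theorem stmt1 (k : ℤ) (hk : 1 ≤ k) (a b : ℕ → ℤ)
    (ha0 : a 0 = 1) (hb0 : b 0 = 1)
    (ha : ∀ n, a (n + 1) = a n + k * b n)
    (hb : ∀ n, b (n + 1) = a n + b n) :
    ∀ n, b (2 * n + 1) = ∑ i ∈ Finset.range (n + 1),
      (Nat.choose (2 * n + 2) (2 * i + 1) : ℤ) * k ^ (n - i) := by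
  have key : ∀ m, ((1 + sqrtd : ℤ√k) ^ (m + 1)).re = a m ∧
      ((1 + sqrtd : ℤ√k) ^ (m + 1)).im = b m := by
    intro m
    induction m with
    | zero =>
        constructor <;> simp [pow_one, Zsqrtd.re_add, Zsqrtd.im_add, ha0, hb0]
    | succ m ih =>
        rw [pow_succ]
        constructor
        · rw [Zsqrtd.re_mul, Zsqrtd.re_add, Zsqrtd.im_add, Zsqrtd.re_one, Zsqrtd.im_one,
            Zsqrtd.re_sqrtd, Zsqrtd.im_sqrtd, ih.1, ih.2, ha]
          ring
        · rw [Zsqrtd.im_mul, Zsqrtd.re_add, Zsqrtd.im_add, Zsqrtd.re_one, Zsqrtd.im_one,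
            Zsqrtd.re_sqrtd, Zsqrtd.im_sqrtd, ih.1, ih.2, hb]
          ring
  intro n
  have hkey := (key (2 * n + 1)).2
  have h21 : 2 * n + 1 + 1 = 2 * n + 2 := rfl
  rw [h21] at hkey
  -- binomial expansion
  have hexp : (1 + sqrtd : ℤ√k) ^ (2 * n + 2) =
      ∑ j ∈ range (2 * n + 3), sqrtd ^ j * (Nat.choose (2 * n + 2) j : ℤ√k) := by
    rw [add_comm, add_pow]
    simp [one_pow]
  have him : ((1 + sqrtd : ℤ√k) ^ (2 * n + 2)).im =
      ∑ j ∈ range (2 * n + 3), (sqrtd ^ j * (Nat.choose (2 * n + 2) j : ℤ√k)).im := by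
    rw [hexp]
    exact map_sum (imHom k) _ _
  -- im of each term
  have hterm : ∀ j, ((sqrtd : ℤ√k) ^ j * (Nat.choose (2 * n + 2) j : ℤ√k)).im
      = (sqrtd ^ j : ℤ√k).im * (Nat.choose (2 * n + 2) j : ℤ) := by
    intro j
    rw [Zsqrtd.im_mul, Zsqrtd.im_natCast, Zsqrtd.re_natCast, mul_zero, zero_add]
  have heven : ∀ i, ((sqrtd : ℤ√k) ^ (2 * i) * (Nat.choose (2 * n + 2) (2 * i) : ℤ√k)).im = 0 := by
    intro i
    rw [hterm, sqrtd_pow_even, Zsqrtd.im_intCast, zero_mul]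
  have hodd : ∀ i, ((sqrtd : ℤ√k) ^ (2 * i + 1) * (Nat.choose (2 * n + 2) (2 * i + 1) : ℤ√k)).im
      = k ^ i * (Nat.choose (2 * n + 2) (2 * i + 1) : ℤ) := by
    intro i
    rw [hterm, sqrtd_pow_odd, Zsqrtd.im_mul, Zsqrtd.im_intCast, Zsqrtd.re_intCast,
      Zsqrtd.im_sqrtd, Zsqrtd.re_sqrtd]
    ring
  rw [← hkey, him, sum_odd_only _ heven n]
  -- now reindex: sum of k^i * C(2n+2, 2i+1) = sum of C(2n+2,2i+1) * k^(n-i)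
  rw [Finset.sum_congr rfl (fun i _ => hodd i)]
  rw [← Finset.sum_range_reflect (fun i => (Nat.choose (2 * n + 2) (2 * i + 1) : ℤ) * k ^ (n - i)) (n + 1)]
  apply Finset.sum_congr rfl
  intro j hj
  have hjn : j ≤ n := by simpa using Nat.lt_succ_iff.mp (Finset.mem_range.mp hj)
  have h1 : n + 1 - 1 - j = n - j := by omega
  rw [h1]
  have h2 : 2 * (n - j) + 1 = (2 * n + 2) - (2 * j + 1) := by omega
  have h3 : 2 * j + 1 ≤ 2 * n + 2 := by omega
  rw [h2, Nat.choose_symm h3]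
  have h4 : n - (n - j) = j := by omega
  rw [h4, mul_comm]
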